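/- Let Y be a Poisson random variable with mean M ≥ 1. Then E[1/(Y+1)²] ≤ M^{−2}(1 + 3M^{−1}). -/

import Mathlib

/-- For a Poisson random variable `Y` with mean `M ≥ 1` (so `P(Y = k) =
M^k e^{-M} / k!`), one has `E[1/(Y+1)²] ≤ M⁻²(1 + 3 M⁻¹)`. -/
theorem poisson_inv_succ_sq_moment (M : ℝ) (hM : 1 ≤ M) :
    (∑' k : ℕ, (M ^ k * Real.exp (-M) / Nat.factorial k) * (1 / ((k : ℝ) + 1) ^ 2))
      ≤ M⁻¹ ^ 2 * (1 + 3 * M⁻¹) := by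
  have hMpos : 0 < M := lt_of_lt_of_le one_pos hM
  set E := Real.exp (-M) with hE
  have hEpos : 0 < E := Real.exp_pos _
  set f : ℕ → ℝ := fun k => (M ^ k * E / Nat.factorial k) * (1 / ((k : ℝ) + 1) ^ 2) with hf
  set g : ℕ → ℝ := fun k => M ^ k * E / Nat.factorial (k + 2) with hg
  set h : ℕ → ℝ := fun k => 3 * (M ^ k * E / Nat.factorial (k + 3)) with hh
  -- pointwise bound
  have hfgh : ∀ k, f k ≤ g k + h k := by
    intro k
    have hx : (0:ℝ) ≤ (k:ℝ) := Nat.cast_nonneg k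
    have hfk : (0:ℝ) < (Nat.factorial k : ℝ) := by positivity
    have h2 : ((Nat.factorial (k + 2) : ℕ) : ℝ)
        = (Nat.factorial k : ℝ) * ((k:ℝ) + 1) * ((k:ℝ) + 2) := by
      push_cast [Nat.factorial_succ]; ring
    have h3 : ((Nat.factorial (k + 3) : ℕ) : ℝ)
        = (Nat.factorial k : ℝ) * ((k:ℝ) + 1) * ((k:ℝ) + 2) * ((k:ℝ) + 3) := by
      push_cast [Nat.factorial_succ]; ring
    have key : (1:ℝ) / ((k:ℝ) + 1) ^ 2
        ≤ 1 / (((k:ℝ) + 1) * ((k:ℝ) + 2)) + 3 / (((k:ℝ) + 1) * ((k:ℝ) + 2) * ((k:ℝ) + 3)) := by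
      rw [div_add_div _ _ (by positivity) (by positivity), div_le_div_iff₀ (by positivity) (by positivity)]
      ring_nf
      nlinarith [sq_nonneg ((k:ℝ)), hx]
    have hc : (0:ℝ) ≤ M ^ k * E / Nat.factorial k := by positivity
    calc f k = (M ^ k * E / Nat.factorial k) * (1 / ((k : ℝ) + 1) ^ 2) := rfl
      _ ≤ (M ^ k * E / Nat.factorial k)
            * (1 / (((k:ℝ) + 1) * ((k:ℝ) + 2)) + 3 / (((k:ℝ) + 1) * ((k:ℝ) + 2) * ((k:ℝ) + 3))) :=
          mul_le_mul_of_nonneg_left key hc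
      _ = g k + h k := by
          simp only [hg, hh, h2, h3]
          field_simp
  -- summability
  have hsum_base : Summable (fun n : ℕ => M ^ n / Nat.factorial n) :=
    Real.summable_pow_div_factorial M
  have hsum_g : Summable g := by
    refine Summable.of_nonneg_of_le (fun k => by positivity) (fun k => ?_)
      ((hsum_base.mul_left E))
    show M ^ k * E / Nat.factorial (k + 2) ≤ E * (M ^ k / Nat.factorial k)
    rw [mul_comm (M ^ k) E, mul_div_assoc]
    refine mul_le_mul_of_nonneg_left ?_ hEpos.le
    apply div_le_div_of_nonneg_left (by positivity) (by positivity)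
    exact_mod_cast Nat.factorial_le (by omega)
  have hsum_h : Summable h := by
    refine Summable.of_nonneg_of_le (fun k => by positivity) (fun k => ?_)
      ((hsum_base.mul_left (3 * E)))
    show 3 * (M ^ k * E / Nat.factorial (k + 3)) ≤ 3 * E * (M ^ k / Nat.factorial k)
    rw [mul_comm (M ^ k) E, mul_div_assoc, mul_assoc]
    refine mul_le_mul_of_nonneg_left (mul_le_mul_of_nonneg_left ?_ hEpos.le) (by norm_num)
    apply div_le_div_of_nonneg_left (by positivity) (by positivity)
    exact_mod_cast Nat.factorial_le (by omega)
  have hsum_gh : Summable (fun k => g k + h k) := hsum_g.add hsum_h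
  have hsum_f : Summable f :=
    Summable.of_nonneg_of_le (fun k => by positivity) hfgh hsum_gh
  -- key: ∑ M^(k+j)/(k+j)! ≤ exp M
  have hexp : ∑' n : ℕ, M ^ n / Nat.factorial n = Real.exp M := by
    rw [Real.exp_eq_exp_ℝ, NormedSpace.exp_eq_tsum_div]
  have hshift : ∀ j : ℕ, (∑' k : ℕ, M ^ (k + j) / Nat.factorial (k + j)) ≤ Real.exp M := by
    intro j
    rw [← hexp]
    refine Summable.tsum_le_tsum_of_inj (fun k => k + j) (add_left_injective j)
      (fun c _ => by positivity) (fun k => le_rfl) ?_ hsum_base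
    exact (summable_nat_add_iff j).mpr hsum_base
  -- bound tsum g
  have htg : ∑' k, g k ≤ M⁻¹ ^ 2 := by
    have hM2 : M⁻¹ ^ 2 * M ^ 2 = 1 := by
      rw [← mul_pow, inv_mul_cancel₀ hMpos.ne']; norm_num
    have : ∀ k, g k = (E * M⁻¹ ^ 2) * (M ^ (k + 2) / Nat.factorial (k + 2)) := by
      intro k
      simp only [hg, pow_add]
      rw [show (E * M⁻¹ ^ 2) * (M ^ k * M ^ 2 / (Nat.factorial (k + 2) : ℝ))
        = (M ^ k * E) * (M⁻¹ ^ 2 * M ^ 2) / (Nat.factorial (k + 2) : ℝ) by ring, hM2, mul_one]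
    calc ∑' k, g k = (E * M⁻¹ ^ 2) * ∑' k, M ^ (k + 2) / Nat.factorial (k + 2) := by
          rw [← tsum_mul_left]; exact tsum_congr this
      _ ≤ (E * M⁻¹ ^ 2) * Real.exp M :=
          mul_le_mul_of_nonneg_left (hshift 2) (by positivity)
      _ = M⁻¹ ^ 2 := by
          rw [hE, mul_comm (Real.exp (-M)), mul_assoc, ← Real.exp_add]
          simp
  have hth : ∑' k, h k ≤ M⁻¹ ^ 2 * (3 * M⁻¹) := by
    have hM3 : M⁻¹ ^ 3 * M ^ 3 = 1 := by
      rw [← mul_pow, inv_mul_cancel₀ hMpos.ne']; norm_num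
    have : ∀ k, h k = (3 * E * M⁻¹ ^ 3) * (M ^ (k + 3) / Nat.factorial (k + 3)) := by
      intro k
      simp only [hh, pow_add]
      rw [show (3 * E * M⁻¹ ^ 3) * (M ^ k * M ^ 3 / (Nat.factorial (k + 3) : ℝ))
        = 3 * ((M ^ k * E) * (M⁻¹ ^ 3 * M ^ 3) / (Nat.factorial (k + 3) : ℝ)) by ring, hM3, mul_one]
    calc ∑' k, h k = (3 * E * M⁻¹ ^ 3) * ∑' k, M ^ (k + 3) / Nat.factorial (k + 3) := by
          rw [← tsum_mul_left]; exact tsum_congr this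
      _ ≤ (3 * E * M⁻¹ ^ 3) * Real.exp M :=
          mul_le_mul_of_nonneg_left (hshift 3) (by positivity)
      _ = M⁻¹ ^ 2 * (3 * M⁻¹) := by
          rw [hE, show 3 * Real.exp (-M) * M⁻¹ ^ 3 * Real.exp M
            = 3 * M⁻¹ ^ 3 * (Real.exp M * Real.exp (-M)) by ring,
            ← Real.exp_add]
          simp
          ring
  calc (∑' k : ℕ, (M ^ k * Real.exp (-M) / Nat.factorial k) * (1 / ((k : ℝ) + 1) ^ 2))
      = ∑' k, f k := rfl
    _ ≤ ∑' k, (g k + h k) := Summable.tsum_le_tsum hfgh hsum_f hsum_gh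
    _ = (∑' k, g k) + ∑' k, h k := Summable.tsum_add hsum_g hsum_h
    _ ≤ M⁻¹ ^ 2 + M⁻¹ ^ 2 * (3 * M⁻¹) := add_le_add htg hth
    _ = M⁻¹ ^ 2 * (1 + 3 * M⁻¹) := by ring
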